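/- Consider the AoI process in which all k seeds are selected simultaneously at time 1 (t_j = 1 for every j ∈ {1,…,k}; the Δ → 0 regime of the NP-hardness reduction). Let T ≥ 1 + max_{v ∈ V} min_{x ∈ {1,…,k}} dist(s_x, v) be an integer and assume A₀ ≥ T. Then the peak AoI satisfies sup_{v ∈ V} sup_{t ∈ [0,T]} A(v,t) = A₀ + 1 + max_{v ∈ V} min_{x ∈ {1,…,k}} dist(s_x, v). -/
import Mathlib

open Finset

def tsel (Δ j : ℕ) : ℕ := (j - 1) * Δ + 1

noncomputable def AoI {V : Type*} (G : SimpleGraph V) (s : ℕ → V) (Δ k A0 : ℕ) (v : V) :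
    ℕ → ℕ
  | 0 => A0
  | t + 1 =>
    let prev := AoI G s Δ k A0 v t
    let Ω : Finset ℕ := (Finset.Icc 1 k).filter
      (fun j => t + 1 = tsel Δ j + G.dist (s j) v ∧ G.dist (s j) v + 1 ≤ prev)
    if h : Ω.Nonempty then Ω.inf' h (fun j => 1 + G.dist (s j) v) else prev + 1

noncomputable def AoIR {V : Type*} (G : SimpleGraph V) (s : ℕ → V) (Δ k A0 : ℕ) (v : V)
    (t : ℝ) : ℝ :=
  (AoI G s Δ k A0 v ⌊t⌋₊ : ℝ) + (t - ⌊t⌋₊)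

open scoped Classical in
noncomputable def Dset {V : Type*} (G : SimpleGraph V) (s : ℕ → V) (Δ k : ℕ) (v : V) :
    Finset ℕ :=
  (Finset.Icc 1 k).filter (fun x => ∀ y ∈ Finset.Icc 1 k, x < y →
    tsel Δ x + G.dist (s x) v < tsel Δ y + G.dist (s y) v)

lemma aoi_formula {V : Type*} (G : SimpleGraph V) (s : ℕ → V) (k A0 : ℕ)
    (hk : 1 ≤ k) (hA0 : 1 ≤ A0) (v : V) (d : ℕ)
    (hd : d = (Finset.Icc 1 k).inf' (Finset.nonempty_Icc.mpr hk) (fun x => G.dist (s x) v)) :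
    ∀ n, AoI G s 0 k A0 v n = if n ≤ d then A0 + n else n := by
  have hdle : ∀ j ∈ Finset.Icc 1 k, d ≤ G.dist (s j) v := by
    intro j hj; rw [hd]; exact Finset.inf'_le _ hj
  obtain ⟨j0, hj0, hj0d⟩ : ∃ j ∈ Finset.Icc 1 k, G.dist (s j) v = d := by
    obtain ⟨j0, hj0, h⟩ := Finset.exists_mem_eq_inf' (Finset.nonempty_Icc.mpr hk)
      (fun x => G.dist (s x) v)
    exact ⟨j0, hj0, by rw [hd, h]⟩
  intro n
  induction n with
  | zero => simp [AoI]
  | succ n ih =>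
    rw [AoI]
    simp only [tsel, Nat.mul_zero, Nat.zero_add, ih]
    rcases lt_trichotomy n d with hlt | heq | hgt
    · rw [dif_neg]
      · simp only [if_pos (Nat.le_of_lt hlt), if_pos (by omega : n + 1 ≤ d)]; omega
      · rintro ⟨j, hj⟩
        simp only [Finset.mem_filter] at hj
        obtain ⟨hjk, h1, h2⟩ := hj
        have := hdle j hjk
        omega
    · subst heq
      simp only [le_refl, if_true]
      have hne : ((Finset.Icc 1 k).filter
          (fun j => n + 1 = 1 + G.dist (s j) v ∧ G.dist (s j) v + 1 ≤ A0 + n)).Nonempty :=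
        ⟨j0, Finset.mem_filter.mpr ⟨hj0, by omega, by omega⟩⟩
      rw [dif_pos hne, if_neg (by omega : ¬ n + 1 ≤ n)]
      refine le_antisymm ?_ ?_
      · refine le_trans (Finset.inf'_le _ (Finset.mem_filter.mpr ⟨hj0, by omega, by omega⟩)) ?_
        omega
      · refine Finset.le_inf' hne _ ?_
        intro j hj
        simp only [Finset.mem_filter] at hj
        omega
    · rw [dif_neg]
      · simp only [if_neg (by omega : ¬ n ≤ d), if_neg (by omega : ¬ n + 1 ≤ d)]
      · rintro ⟨j, hj⟩
        simp only [Finset.mem_filter, if_neg (by omega : ¬ n ≤ d)] at hj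
        omega

theorem stmt15 {V : Type*} [Fintype V] (G : SimpleGraph V) (hconn : G.Connected)
    (s : ℕ → V) (k A0 T : ℕ) (hk : 1 ≤ k) (hA0 : 1 ≤ A0)
    (M : ℕ)
    (hM : M = Finset.univ.sup (fun v : V =>
      (Finset.Icc 1 k).inf' (Finset.nonempty_Icc.mpr hk) (fun x => G.dist (s x) v)))
    (hT : 1 + M ≤ T) (hA0T : T ≤ A0) :
    sSup {x : ℝ | ∃ v : V, ∃ t : ℝ, 0 ≤ t ∧ t ≤ (T : ℝ) ∧ x = AoIR G s 0 k A0 v t}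
      = (A0 : ℝ) + 1 + M := by
  have hV : Nonempty V := hconn.nonempty
  set f : V → ℕ := fun v =>
    (Finset.Icc 1 k).inf' (Finset.nonempty_Icc.mpr hk) (fun x => G.dist (s x) v) with hf
  have hform : ∀ (v : V) (n : ℕ), AoI G s 0 k A0 v n = if n ≤ f v then A0 + n else n :=
    fun v => aoi_formula G s k A0 hk hA0 v (f v) rfl
  have hfM : ∀ v : V, f v ≤ M := fun v => hM ▸ Finset.le_sup (Finset.mem_univ v)
  obtain ⟨v0, _, hv0⟩ := Finset.exists_mem_eq_sup (Finset.univ : Finset V)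
    Finset.univ_nonempty f
  have hv0M : f v0 = M := by rw [hM, hv0]
  apply csSup_eq_of_forall_le_of_forall_lt_exists_gt
  · exact ⟨AoIR G s 0 k A0 v0 0, v0, 0, le_refl 0, by positivity, rfl⟩
  · rintro x ⟨v, t, ht0, htT, rfl⟩
    have hfl : ⌊t⌋₊ ≤ T := by
      have h1 : (⌊t⌋₊ : ℝ) ≤ t := Nat.floor_le ht0
      exact_mod_cast h1.trans htT
    have hb : AoI G s 0 k A0 v ⌊t⌋₊ ≤ A0 + M := by
      rw [hform]
      split_ifs with h
      · have := (h.trans (hfM v)); omega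
      · omega
    have hfr : t - ⌊t⌋₊ < 1 := by
      have := Nat.lt_floor_add_one t; linarith
    unfold AoIR
    have hb' : (AoI G s 0 k A0 v ⌊t⌋₊ : ℝ) ≤ (A0 : ℝ) + M := by exact_mod_cast hb
    linarith
  · rintro w hw
    set c : ℝ := w - ((A0 : ℝ) + M) with hc
    have hc1 : c < 1 := by rw [hc]; linarith
    set fr : ℝ := max 0 ((c + 1) / 2) with hfrdef
    have hfr0 : 0 ≤ fr := le_max_left _ _
    have hfr1 : fr < 1 := max_lt one_pos (by linarith)
    have hfrc : c < fr := lt_of_lt_of_le (by linarith : c < (c + 1) / 2) (le_max_right _ _)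
    refine ⟨AoIR G s 0 k A0 v0 ((M : ℝ) + fr), ⟨v0, (M : ℝ) + fr, by positivity, ?_, rfl⟩, ?_⟩
    · have : (M : ℝ) + 1 ≤ T := by exact_mod_cast (by omega : M + 1 ≤ T)
      linarith
    · have hfloor : ⌊(M : ℝ) + fr⌋₊ = M := by
        rw [Nat.floor_eq_iff (by positivity)]
        exact ⟨by linarith, by linarith⟩
      unfold AoIR
      rw [hfloor, hform, if_pos (le_of_eq hv0M.symm)]
      push_cast
      linarith
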